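/- For real parameters b, c, p > 0, 0 < β < α < 1, f₁, f₂, f₃ > 0 satisfying f₃ > f₁, the point x₁ = (b f₁/(c p β))(1−α), x₂ = 0, x₃ = (b/(cp))(f₃ − f₁ + (α/β) f₁), r₁ = 0, r₂ = f₁/(p β), r₃ = (f₃ − f₁)/p is an equilibrium of the branch-cycle three-node system: ẋ₁ = f₁x₁ − p x₁(r₁ + β r₂), ẋ₂ = f₂x₂ − p x₂(r₂ + β r₃), ẋ₃ = f₃x₃ − p x₃(β r₂ + r₃), ṙ₁ = c x₁ r₁/(r₁+α r₂) − b r₁, ṙ₂ = c(x₁ α r₂/(r₁+α r₂) + x₂ r₂/(r₂+α r₃) + x₃ α r₂/(α r₂+r₃)) − b r₂, ṙ₃ = c(x₂ α r₃/(r₂+α r₃) + x₃ r₃/(α r₂+r₃)) − b r₃. Moreover all population values x₁, x₃, r₂, r₃ at this point are strictly positive. -/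

import Mathlib

theorem stmt_8 (b c p α β f₁ f₂ f₃ : ℝ)
    (hb : 0 < b) (hc : 0 < c) (hp : 0 < p)
    (hβ : 0 < β) (hβα : β < α) (hα1 : α < 1)
    (hf₁ : 0 < f₁) (hf₂ : 0 < f₂) (hf₃ : 0 < f₃) (h31 : f₁ < f₃) :
    let x₁ : ℝ := b * f₁ / (c * p * β) * (1 - α)
    let x₂ : ℝ := 0
    let x₃ : ℝ := b / (c * p) * (f₃ - f₁ + (α / β) * f₁)
    let r₁ : ℝ := 0
    let r₂ : ℝ := f₁ / (p * β)
    let r₃ : ℝ := (f₃ - f₁) / p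
    (f₁ * x₁ - p * x₁ * (r₁ + β * r₂) = 0) ∧
    (f₂ * x₂ - p * x₂ * (r₂ + β * r₃) = 0) ∧
    (f₃ * x₃ - p * x₃ * (β * r₂ + r₃) = 0) ∧
    (c * x₁ * r₁ / (r₁ + α * r₂) - b * r₁ = 0) ∧
    (c * (x₁ * (α * r₂) / (r₁ + α * r₂) + x₂ * r₂ / (r₂ + α * r₃) +
        x₃ * (α * r₂) / (α * r₂ + r₃)) - b * r₂ = 0) ∧
    (c * (x₂ * (α * r₃) / (r₂ + α * r₃) + x₃ * r₃ / (α * r₂ + r₃)) - b * r₃ = 0) ∧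
    0 < x₁ ∧ 0 < x₃ ∧ 0 < r₂ ∧ 0 < r₃ := by
  intro x₁ x₂ x₃ r₁ r₂ r₃
  have hα : (0:ℝ) < α := hβ.trans hβα
  have hb' := hb.ne'
  have hc' := hc.ne'
  have hp' := hp.ne'
  have hβ' := hβ.ne'
  have hα' := hα.ne'
  have hf₁' := hf₁.ne'
  have hr₂ : (0:ℝ) < r₂ := div_pos hf₁ (mul_pos hp hβ)
  have hr₃ : (0:ℝ) < r₃ := div_pos (by linarith) hp
  have hd1 : r₁ + α * r₂ ≠ 0 := by positivity
  have hd2 : r₂ + α * r₃ ≠ 0 := by positivity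
  have hd3 : α * r₂ + r₃ ≠ 0 := by positivity
  refine ⟨?_, by simp [x₂], ?_, by simp [r₁], ?_, ?_, ?_, ?_, hr₂, hr₃⟩
  · show f₁ * x₁ - p * x₁ * (r₁ + β * r₂) = 0
    simp only [x₁, r₁, r₂]
    field_simp
    ring
  · show f₃ * x₃ - p * x₃ * (β * r₂ + r₃) = 0
    simp only [x₃, r₂, r₃]
    field_simp
    ring
  · show c * (x₁ * (α * r₂) / (r₁ + α * r₂) + x₂ * r₂ / (r₂ + α * r₃) +
        x₃ * (α * r₂) / (α * r₂ + r₃)) - b * r₂ = 0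
    have e1 : x₁ * (α * r₂) / (r₁ + α * r₂) = x₁ := by
      show x₁ * (α * r₂) / ((0:ℝ) + α * r₂) = x₁
      rw [zero_add, mul_div_assoc, div_self (by positivity), mul_one]
    rw [e1]
    show c * (x₁ + 0 * r₂ / (r₂ + α * r₃) + x₃ * (α * r₂) / (α * r₂ + r₃)) - b * r₂ = 0
    rw [zero_mul, zero_div]
    have key : α * r₂ + r₃ = (α * f₁ + β * (f₃ - f₁)) / (p * β) := by
      show α * (f₁ / (p * β)) + (f₃ - f₁) / p = _
      field_simp
    rw [key]
    show c * (b * f₁ / (c * p * β) * (1 - α) + 0 +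
        b / (c * p) * (f₃ - f₁ + α / β * f₁) * (α * (f₁ / (p * β))) /
        ((α * f₁ + β * (f₃ - f₁)) / (p * β))) - b * (f₁ / (p * β)) = 0
    have hden : α * f₁ + β * (f₃ - f₁) ≠ 0 := by
      have : (0:ℝ) < α * f₁ + β * (f₃ - f₁) := by
        have : (0:ℝ) < β * (f₃ - f₁) := mul_pos hβ (by linarith)
        nlinarith
      exact this.ne'
    generalize hD : α * f₁ + β * (f₃ - f₁) = D at hden ⊢
    field_simp
    rw [← hD]
    ring
  · show c * (x₂ * (α * r₃) / (r₂ + α * r₃) + x₃ * r₃ / (α * r₂ + r₃)) - b * r₃ = 0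
    show c * (0 * (α * r₃) / (r₂ + α * r₃) + x₃ * r₃ / (α * r₂ + r₃)) - b * r₃ = 0
    rw [zero_mul, zero_div, zero_add]
    have key : α * r₂ + r₃ = (α * f₁ + β * (f₃ - f₁)) / (p * β) := by
      show α * (f₁ / (p * β)) + (f₃ - f₁) / p = _
      field_simp
    rw [key]
    show c * (b / (c * p) * (f₃ - f₁ + α / β * f₁) * ((f₃ - f₁) / p) /
        ((α * f₁ + β * (f₃ - f₁)) / (p * β))) - b * ((f₃ - f₁) / p) = 0
    have hden : α * f₁ + β * (f₃ - f₁) ≠ 0 := by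
      have : (0:ℝ) < α * f₁ + β * (f₃ - f₁) := by
        have : (0:ℝ) < β * (f₃ - f₁) := mul_pos hβ (by linarith)
        nlinarith
      exact this.ne'
    generalize hD : α * f₁ + β * (f₃ - f₁) = D at hden ⊢
    field_simp
    rw [← hD]
    ring
  · show (0:ℝ) < x₁
    simp only [x₁]
    have : (0:ℝ) < 1 - α := by linarith
    positivity
  · show (0:ℝ) < x₃
    simp only [x₃]
    have : (0:ℝ) < f₃ - f₁ + α / β * f₁ := by
      have : (0:ℝ) < α / β * f₁ := by positivity
      linarith
    positivity
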